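/- Let B be a strongly E-Birkhoff Galois structure on a Barr exact category C. Coverings are stable under quotients along double extensions: if (φ₁, φ₀) : f_A → f_B is a double extension and f_A is a covering, then f_B is a covering. -/

import Mathlib

open CategoryTheory CategoryTheory.Limits

universe v u

namespace Paper

variable {C : Type u} [Category.{v} C]

/-- `f` is a regular epimorphism. -/
def IsRegEpi {X Y : C} (f : X ⟶ Y) : Prop := Nonempty (RegularEpi f)

/-- A regular category: a finitely complete category with coequalizers of kernel pairs in
which regular epimorphisms are stable under pullback. -/
class RegularCat (C : Type u) [Category.{v} C] [HasFiniteLimits C] : Prop where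
  hasCoeqOfKernelPairs : ∀ {X Y : C} (f : X ⟶ Y),
    HasCoequalizer (pullback.fst f f) (pullback.snd f f)
  regEpiPullbackStable : ∀ {X Y Z : C} (f : X ⟶ Y) (g : Z ⟶ Y),
    IsRegEpi f → IsRegEpi (pullback.snd f g)

/-- An internal equivalence relation given by a parallel pair `r₁ r₂ : R ⟶ X`. -/
structure IsEquivRel [HasFiniteLimits C] {R X : C} (r₁ r₂ : R ⟶ X) : Prop where
  jointlyMono : Mono (prod.lift r₁ r₂)
  refl : ∃ d : X ⟶ R, d ≫ r₁ = 𝟙 X ∧ d ≫ r₂ = 𝟙 X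
  symm : ∃ s : R ⟶ R, s ≫ r₁ = r₂ ∧ s ≫ r₂ = r₁
  trans : ∃ t : pullback r₂ r₁ ⟶ R,
    t ≫ r₁ = pullback.fst r₂ r₁ ≫ r₁ ∧ t ≫ r₂ = pullback.snd r₂ r₁ ≫ r₂

/-- A Barr exact category: a regular category in which every internal equivalence relation
is effective (i.e. is a kernel pair). -/
class BarrExact (C : Type u) [Category.{v} C] [HasFiniteLimits C] extends RegularCat C : Prop where
  equivRelEffective : ∀ {R X : C} (r₁ r₂ : R ⟶ X), IsEquivRel r₁ r₂ →
    ∃ (Y : C) (f : X ⟶ Y), IsKernelPair f r₁ r₂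

section DoubleExt
variable [HasFiniteLimits C]

/-- A double extension: a commutative square `αt ≫ fB = fA ≫ αb` of regular epimorphisms
whose comparison morphism to the pullback is also a regular epimorphism. -/
structure IsDoubleExt {A₁ A₀ B₁ B₀ : C} (fA : A₁ ⟶ A₀) (fB : B₁ ⟶ B₀)
    (αt : A₁ ⟶ B₁) (αb : A₀ ⟶ B₀) : Prop where
  w : αt ≫ fB = fA ≫ αb
  left : IsRegEpi fA
  right : IsRegEpi fB
  top : IsRegEpi αt
  bot : IsRegEpi αb
  comparison : IsRegEpi (pullback.lift fA αt w.symm : A₁ ⟶ pullback αb fB)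

end DoubleExt

/-- The category `Ext C` of extensions: the full subcategory of the arrow category of `C`
determined by the regular epimorphisms. -/
abbrev ExtCat (C : Type u) [Category.{v} C] : Type max u v :=
  ObjectProperty.FullSubcategory (fun f : Arrow C => IsRegEpi f.hom)

/-- An object of `Ext C` from a regular epimorphism. -/
def ExtCat.mk' {X Y : C} (f : X ⟶ Y) (hf : IsRegEpi f) : ExtCat C :=
  ⟨Arrow.mk f, hf⟩

/-- The top (domain) component of a morphism of `Ext C`. -/
def ExtCat.homLeft {f g : ExtCat C} (φ : f ⟶ g) : f.obj.left ⟶ g.obj.left :=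
  CommaMorphism.left φ.hom

/-- The bottom (codomain) component of a morphism of `Ext C`. -/
def ExtCat.homRight {f g : ExtCat C} (φ : f ⟶ g) : f.obj.right ⟶ g.obj.right :=
  CommaMorphism.right φ.hom

lemma ExtCat.homLeft_comp {f g h : ExtCat C} (a : f ⟶ g) (b : g ⟶ h) :
    ExtCat.homLeft (a ≫ b) = ExtCat.homLeft a ≫ ExtCat.homLeft b := rfl

lemma ExtCat.homRight_comp {f g h : ExtCat C} (a : f ⟶ g) (b : g ⟶ h) :
    ExtCat.homRight (a ≫ b) = ExtCat.homRight a ≫ ExtCat.homRight b := rfl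

lemma ExtCat.hom_w {f g : ExtCat C} (φ : f ⟶ g) :
    ExtCat.homLeft φ ≫ g.obj.hom = f.obj.hom ≫ ExtCat.homRight φ :=
  CommaMorphism.w φ.hom

/-- A morphism of `Ext C` from a commutative square in `C`. -/
def ExtCat.homMk' {X₁ X₀ Y₁ Y₀ : C} {f : X₁ ⟶ X₀} {g : Y₁ ⟶ Y₀}
    {hf : IsRegEpi f} {hg : IsRegEpi g}
    (u : X₁ ⟶ Y₁) (v : X₀ ⟶ Y₀) (w : u ≫ g = f ≫ v) :
    ExtCat.mk' f hf ⟶ ExtCat.mk' g hg :=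
  ObjectProperty.homMk (Arrow.homMk (u := u) (v := v) w)

/-- A (commutative) square in `C`, with left vertical `left : A₁ ⟶ A₀`, right vertical
`right : B₁ ⟶ B₀`, top horizontal `top : A₁ ⟶ B₁` and bottom horizontal `bot : A₀ ⟶ B₀`. -/
structure Sq (C : Type u) [Category.{v} C] where
  A₁ : C
  A₀ : C
  B₁ : C
  B₀ : C
  left : A₁ ⟶ A₀
  right : B₁ ⟶ B₀
  top : A₁ ⟶ B₁
  bot : A₀ ⟶ B₀
  w : top ≫ right = left ≫ bot

/-- The square is a double extension. -/
def Sq.IsDE [HasFiniteLimits C] (s : Sq C) : Prop :=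
  IsDoubleExt s.left s.right s.top s.bot

/-- A commutative cube, presented as a morphism of squares `Φ : s ⟶ t`. -/
structure SqHom (s t : Sq C) where
  h₁₁ : s.A₁ ⟶ t.A₁
  h₁₀ : s.A₀ ⟶ t.A₀
  h₀₁ : s.B₁ ⟶ t.B₁
  h₀₀ : s.B₀ ⟶ t.B₀
  wA : h₁₁ ≫ t.left = s.left ≫ h₁₀
  wB : h₀₁ ≫ t.right = s.right ≫ h₀₀
  wt : h₁₁ ≫ t.top = s.top ≫ h₀₁
  wb : h₁₀ ≫ t.bot = s.bot ≫ h₀₀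

/-- Composition of cubes (as morphisms of squares). -/
def SqHom.comp {s t u : Sq C} (Φ : SqHom s t) (Ψ : SqHom t u) : SqHom s u where
  h₁₁ := Φ.h₁₁ ≫ Ψ.h₁₁
  h₁₀ := Φ.h₁₀ ≫ Ψ.h₁₀
  h₀₁ := Φ.h₀₁ ≫ Ψ.h₀₁
  h₀₀ := Φ.h₀₀ ≫ Ψ.h₀₀
  wA := by rw [Category.assoc, Ψ.wA, ← Category.assoc, Φ.wA, Category.assoc]
  wB := by rw [Category.assoc, Ψ.wB, ← Category.assoc, Φ.wB, Category.assoc]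
  wt := by rw [Category.assoc, Ψ.wt, ← Category.assoc, Φ.wt, Category.assoc]
  wb := by rw [Category.assoc, Ψ.wb, ← Category.assoc, Φ.wb, Category.assoc]

section Cube
variable [HasFiniteLimits C]

/-- Seen as a morphism `(σ, β) : s ⟶ t` between the double extensions `s` (as the arrow
`s.left → s.right`) and `t`, the face `σ` of the cube: the square from `s.left` to `t.left`. -/
def SqHom.sigmaSq {s t : Sq C} (Φ : SqHom s t) : Sq C where
  A₁ := s.A₁
  A₀ := s.A₀
  B₁ := t.A₁
  B₀ := t.A₀
  left := s.left
  right := t.left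
  top := Φ.h₁₁
  bot := Φ.h₁₀
  w := Φ.wA

/-- The face `β` of the cube: the square from `s.right` to `t.right`. -/
def SqHom.betaSq {s t : Sq C} (Φ : SqHom s t) : Sq C where
  A₁ := s.B₁
  A₀ := s.B₀
  B₁ := t.B₁
  B₀ := t.B₀
  left := s.right
  right := t.right
  top := Φ.h₀₁
  bot := Φ.h₀₀
  w := Φ.wB

/-- Top component of the componentwise pullback of `t` (i.e. `α`) and `betaSq Φ` (i.e. `β`). -/
noncomputable def SqHom.P₁ {s t : Sq C} (Φ : SqHom s t) : C := pullback t.top Φ.h₀₁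

/-- Bottom component of the componentwise pullback of `α` and `β`. -/
noncomputable def SqHom.P₀ {s t : Sq C} (Φ : SqHom s t) : C := pullback t.bot Φ.h₀₀

/-- The induced arrow between the components of the componentwise pullback of `α` and `β`. -/
noncomputable def SqHom.fP {s t : Sq C} (Φ : SqHom s t) : Φ.P₁ ⟶ Φ.P₀ :=
  pullback.map t.top Φ.h₀₁ t.bot Φ.h₀₀ t.left s.right t.right t.w Φ.wB

/-- The top comparison morphism. -/
noncomputable def SqHom.c₁ {s t : Sq C} (Φ : SqHom s t) : s.A₁ ⟶ Φ.P₁ :=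
  pullback.lift Φ.h₁₁ s.top Φ.wt

/-- The bottom comparison morphism. -/
noncomputable def SqHom.c₀ {s t : Sq C} (Φ : SqHom s t) : s.A₀ ⟶ Φ.P₀ :=
  pullback.lift Φ.h₁₀ s.bot Φ.wb

lemma SqHom.comp_w {s t : Sq C} (Φ : SqHom s t) : Φ.c₁ ≫ Φ.fP = s.left ≫ Φ.c₀ := by
  apply pullback.hom_ext
  · simp [SqHom.c₁, SqHom.c₀, SqHom.fP, SqHom.P₀, SqHom.P₁, pullback.lift_fst, pullback.lift_fst_assoc, Φ.wA]
  · simp [SqHom.c₁, SqHom.c₀, SqHom.fP, SqHom.P₀, SqHom.P₁, pullback.lift_snd, pullback.lift_snd_assoc, s.w]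

/-- The comparison square of the cube `Φ`, from `s.left` to the componentwise pullback
of `α` and `β`. -/
noncomputable def SqHom.compSq {s t : Sq C} (Φ : SqHom s t) : Sq C where
  A₁ := s.A₁
  A₀ := s.A₀
  B₁ := Φ.P₁
  B₀ := Φ.P₀
  left := s.left
  right := Φ.fP
  top := Φ.c₁
  bot := Φ.c₀
  w := Φ.comp_w

/-- A `3`-cubical extension: the two opposite faces `γ = s` and `α = t`, the two connecting
faces `σ` and `β`, and the comparison square to the componentwise pullback of `α` and `β`
are all double extensions. -/
def SqHom.Is3CubExt {s t : Sq C} (Φ : SqHom s t) : Prop :=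
  s.IsDE ∧ t.IsDE ∧ Φ.sigmaSq.IsDE ∧ Φ.betaSq.IsDE ∧ Φ.compSq.IsDE

end Cube

/-- The cube `Φ : s ⟶ t` is a limit cube: the cone from the initial vertex `s.A₁` on the
diagram formed by the remaining seven vertices is a limit cone. -/
def SqHom.IsLimitCube {s t : Sq C} (Φ : SqHom s t) : Prop :=
  ∀ (W : C) (wA₀ : W ⟶ s.A₀) (wB₁ : W ⟶ s.B₁) (wtA₁ : W ⟶ t.A₁),
    wA₀ ≫ s.bot = wB₁ ≫ s.right →
    wA₀ ≫ Φ.h₁₀ = wtA₁ ≫ t.left →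
    wB₁ ≫ Φ.h₀₁ = wtA₁ ≫ t.top →
    ∃! u : W ⟶ s.A₁, u ≫ s.left = wA₀ ∧ u ≫ s.top = wB₁ ∧ u ≫ Φ.h₁₁ = wtA₁

/-- A discrete fibration (of order 3): a `3`-cubical extension which is a limit cube. -/
def SqHom.IsDiscFib [HasFiniteLimits C] {s t : Sq C} (Φ : SqHom s t) : Prop :=
  Φ.Is3CubExt ∧ Φ.IsLimitCube
section Galois
variable [HasFiniteLimits C]

/-- A strongly E-Birkhoff Galois structure on `C`: a full replete reflective subcategory
(given by the predicate `inB`, the reflector `F` and the unit `η`) such that every unit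
component is a regular epimorphism and every naturality square of the unit at a regular
epimorphism is a double extension. -/
structure BirkhoffStructure (C : Type u) [Category.{v} C] [HasFiniteLimits C] where
  inB : C → Prop
  replete : ∀ {X Y : C}, inB X → (X ≅ Y) → inB Y
  F : C ⥤ C
  η : 𝟭 C ⟶ F
  obj_inB : ∀ A : C, inB (F.obj A)
  unit_regEpi : ∀ A : C, IsRegEpi (η.app A)
  univ : ∀ {A X : C}, inB X → ∀ g : A ⟶ X, ∃! h : F.obj A ⟶ X, η.app A ≫ h = g
  stronglyBirkhoff : ∀ {A B : C} (f : A ⟶ B), IsRegEpi f →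
    IsDoubleExt f (F.map f) (η.app A) (η.app B)

/-- A trivial covering: a regular epimorphism whose unit naturality square is a pullback. -/
def TrivialCovering (G : BirkhoffStructure C) {T E : C} (t : T ⟶ E) : Prop :=
  IsRegEpi t ∧ IsPullback (G.η.app T) t (G.F.map t) (G.η.app E)

/-- A covering: a regular epimorphism whose pullback along some regular epimorphism is a
trivial covering. -/
def Covering (G : BirkhoffStructure C) {A B : C} (c : A ⟶ B) : Prop :=
  IsRegEpi c ∧ ∃ (E : C) (e : E ⟶ B), IsRegEpi e ∧ TrivialCovering G (pullback.snd c e)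

end Galois

/-- The underlying square in `C` of a morphism of `Ext C`. -/
def sqOfHom {f g : ExtCat C} (φ : f ⟶ g) : Sq C where
  A₁ := f.obj.left
  A₀ := f.obj.right
  B₁ := g.obj.left
  B₀ := g.obj.right
  left := f.obj.hom
  right := g.obj.hom
  top := ExtCat.homLeft φ
  bot := ExtCat.homRight φ
  w := ExtCat.hom_w φ

/-- The underlying cube in `C` of a naturality square in `Ext C` of a natural
transformation `η₁ : 𝟭 (Ext C) ⟶ F₁` at a morphism `φ : f ⟶ g` of `Ext C`. -/
def natCube (F₁ : ExtCat C ⥤ ExtCat C) (η₁ : 𝟭 (ExtCat C) ⟶ F₁) {f g : ExtCat C}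
    (φ : f ⟶ g) : SqHom (sqOfHom φ) (sqOfHom (F₁.map φ)) where
  h₁₁ := ExtCat.homLeft (η₁.app f)
  h₁₀ := ExtCat.homRight (η₁.app f)
  h₀₁ := ExtCat.homLeft (η₁.app g)
  h₀₀ := ExtCat.homRight (η₁.app g)
  wA := ExtCat.hom_w (η₁.app f)
  wB := ExtCat.hom_w (η₁.app g)
  wt := by
    have h := congrArg ExtCat.homLeft (η₁.naturality φ)
    rw [ExtCat.homLeft_comp, ExtCat.homLeft_comp] at h
    exact h.symm
  wb := by
    have h := congrArg ExtCat.homRight (η₁.naturality φ)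
    rw [ExtCat.homRight_comp, ExtCat.homRight_comp] at h
    exact h.symm

section LevelOne
variable [HasFiniteLimits C]

/-- The level-one Galois structure induced by a strongly E-Birkhoff Galois structure `G`:
the coverings form a reflective subcategory of `Ext C`, with reflector `F₁` and unit `η₁`,
every unit component is a double extension, and the reflection is strongly E₂-Birkhoff. -/
structure LevelOne (G : BirkhoffStructure C) where
  F₁ : ExtCat C ⥤ ExtCat C
  η₁ : 𝟭 (ExtCat C) ⟶ F₁
  obj_cov : ∀ f : ExtCat C, Covering G (F₁.obj f).obj.hom
  univ : ∀ {f x : ExtCat C}, Covering G x.obj.hom → ∀ g : f ⟶ x,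
    ∃! h : F₁.obj f ⟶ x, η₁.app f ≫ h = g
  unit_DE : ∀ f : ExtCat C, (sqOfHom (η₁.app f)).IsDE
  stronglyBirkhoff : ∀ {f g : ExtCat C} (φ : f ⟶ g), (sqOfHom φ).IsDE →
    (natCube F₁ η₁ φ).Is3CubExt

/-- A trivial double covering: a morphism of `Ext C` whose underlying square is a double
extension and whose `η₁`-naturality square is a pullback in `Ext C`. -/
def TrivDoubleCov {G : BirkhoffStructure C} (L : LevelOne G) {f g : ExtCat C}
    (φ : f ⟶ g) : Prop :=
  (sqOfHom φ).IsDE ∧ IsPullback (L.η₁.app f) φ (L.F₁.map φ) (L.η₁.app g)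

/-- A double covering: a double extension `α : d ⟶ c` in `Ext C` such that the pullback of
`α` along some double extension `γ : e ⟶ c` is a trivial double covering. -/
def DoubleCov {G : BirkhoffStructure C} (L : LevelOne G) {d c : ExtCat C}
    (α : d ⟶ c) : Prop :=
  (sqOfHom α).IsDE ∧ ∃ (e : ExtCat C) (γ : e ⟶ c), (sqOfHom γ).IsDE ∧
    ∃ (p : ExtCat C) (pγ : p ⟶ e) (pα : p ⟶ d),
      IsPullback pγ pα γ α ∧ TrivDoubleCov L pγ

end LevelOne
section Helpers

lemma IsRegEpi.epi {X Y : C} {f : X ⟶ Y} (hf : IsRegEpi f) : Epi f := by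
  obtain ⟨r⟩ := hf
  exact @RegularEpi.epi _ _ _ _ f r

/-- Precomposition with an isomorphism preserves regular epimorphisms. -/
lemma IsRegEpi.iso_comp {X Y Z : C} (i : X ⟶ Y) [IsIso i] {f : Y ⟶ Z} (hf : IsRegEpi f) :
    IsRegEpi (i ≫ f) := by
  obtain ⟨r⟩ := hf
  have w : (r.left ≫ inv i) ≫ (i ≫ f) = (r.right ≫ inv i) ≫ (i ≫ f) := by
    simp [r.w]
  refine ⟨⟨r.W, r.left ≫ inv i, r.right ≫ inv i, w, ?_⟩⟩
  refine Cofork.IsColimit.mk _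
    (fun s => Cofork.IsColimit.desc r.isColimit (inv i ≫ s.π) ?_) (fun s => ?_)
    (fun s m hm => ?_)
  · simpa using s.condition
  · have h := Cofork.IsColimit.π_desc' r.isColimit (inv i ≫ s.π) (by simpa using s.condition)
    simp only [Cofork.π_ofπ] at h
    simp only [Cofork.π_ofπ, Category.assoc, h, IsIso.hom_inv_id_assoc]
  · apply Cofork.IsColimit.hom_ext r.isColimit
    have h : (i ≫ f) ≫ m = s.π := hm
    have hfm : f ≫ m = inv i ≫ s.π := by rw [← h]; simp
    have h2 := Cofork.IsColimit.π_desc' r.isColimit (inv i ≫ s.π) (by simpa using s.condition)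
    simp only [Cofork.π_ofπ] at h2 ⊢
    rw [hfm, h2]

variable [HasFiniteLimits C]

/-- In a regular category, the composite of regular epimorphisms is a regular epimorphism. -/
lemma isRegEpi_comp [RegularCat C] {X Y Z : C} {f : X ⟶ Y} {g : Y ⟶ Z}
    (hf : IsRegEpi f) (hg : IsRegEpi g) : IsRegEpi (f ≫ g) := by
  obtain ⟨rf⟩ := hf
  obtain ⟨rg⟩ := hg
  haveI := rf
  haveI := rg
  -- `f` is the coequalizer of its kernel pair, and likewise for `g`.
  have cf : IsColimit (Cofork.ofπ f (IsPullback.of_hasPullback f f).w) :=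
    IsKernelPair.toCoequalizer (IsPullback.of_hasPullback f f) rf
  have cg : IsColimit (Cofork.ofπ g (IsPullback.of_hasPullback g g).w) :=
    IsKernelPair.toCoequalizer (IsPullback.of_hasPullback g g) rg
  refine ⟨regularEpiOfKernelPair (f ≫ g) (Cofork.IsColimit.mk' _ (fun s => ?_))⟩
  -- Step A: `s.π` coequalizes the kernel pair of `f`, hence factors through `f`.
  have wj : pullback.fst f f ≫ (f ≫ g) = pullback.snd f f ≫ (f ≫ g) := by
    rw [← Category.assoc, pullback.condition, Category.assoc]
  have hA : pullback.fst f f ≫ s.π = pullback.snd f f ≫ s.π := by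
    have h₁ : pullback.fst f f ≫ s.π
        = pullback.lift (pullback.fst f f) (pullback.snd f f) wj ≫
            pullback.fst (f ≫ g) (f ≫ g) ≫ s.π := by
      rw [← Category.assoc, pullback.lift_fst]
    have h₂ : pullback.lift (pullback.fst f f) (pullback.snd f f) wj ≫
        pullback.snd (f ≫ g) (f ≫ g) ≫ s.π = pullback.snd f f ≫ s.π := by
      rw [← Category.assoc, pullback.lift_snd]
    rw [h₁, s.condition, h₂]
  obtain ⟨h', hh'⟩ := Cofork.IsColimit.desc' cf s.π hA
  simp only [Cofork.π_ofπ] at hh'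
  -- Step B: `h'` coequalizes the kernel pair of `g`, hence factors through `g`.
  have c1 := reassoc_of% (pullback.condition (f := f) (g := pullback.fst g g))
  have c2 := reassoc_of% (pullback.condition (f := f)
    (g := pullback.snd f (pullback.fst g g) ≫ pullback.snd g g))
  haveI : Epi (pullback.snd f (pullback.fst g g)) :=
    (RegularCat.regEpiPullbackStable f (pullback.fst g g) ⟨rf⟩).epi
  haveI : Epi (pullback.snd f (pullback.snd f (pullback.fst g g) ≫ pullback.snd g g)) :=
    (RegularCat.regEpiPullbackStable f
      (pullback.snd f (pullback.fst g g) ≫ pullback.snd g g) ⟨rf⟩).epi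
  have hB : pullback.fst g g ≫ h' = pullback.snd g g ≫ h' := by
    have w : (pullback.snd f (pullback.snd f (pullback.fst g g) ≫ pullback.snd g g) ≫
        pullback.fst f (pullback.fst g g)) ≫ (f ≫ g)
        = pullback.fst f (pullback.snd f (pullback.fst g g) ≫ pullback.snd g g) ≫ (f ≫ g) := by
      simp only [Category.assoc]
      rw [c1, c2, pullback.condition (f := g) (g := g)]
    have hc : (pullback.snd f (pullback.snd f (pullback.fst g g) ≫ pullback.snd g g) ≫
        pullback.fst f (pullback.fst g g)) ≫ s.π
        = pullback.fst f (pullback.snd f (pullback.fst g g) ≫ pullback.snd g g) ≫ s.π := by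
      have h₁ : (pullback.snd f (pullback.snd f (pullback.fst g g) ≫ pullback.snd g g) ≫
          pullback.fst f (pullback.fst g g)) ≫ s.π
          = pullback.lift _ _ w ≫ pullback.fst (f ≫ g) (f ≫ g) ≫ s.π := by
        rw [← Category.assoc, pullback.lift_fst]
      have h₂ : pullback.lift _ _ w ≫ pullback.snd (f ≫ g) (f ≫ g) ≫ s.π
          = pullback.fst f (pullback.snd f (pullback.fst g g) ≫ pullback.snd g g) ≫ s.π := by
        rw [← Category.assoc, pullback.lift_snd]
      rw [h₁, s.condition, h₂]
    rw [← hh'] at hc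
    simp only [Category.assoc] at hc
    rw [c1, c2] at hc
    rwa [cancel_epi, cancel_epi] at hc
  obtain ⟨h'', hh''⟩ := Cofork.IsColimit.desc' cg h' hB
  simp only [Cofork.π_ofπ] at hh''
  refine ⟨h'', ?_, ?_⟩
  · simp only [Cofork.π_ofπ, Category.assoc, hh'', hh']
  · intro m hm
    haveI : Epi (f ≫ g) := epi_comp' (IsRegEpi.epi ⟨rf⟩) (IsRegEpi.epi ⟨rg⟩)
    have hm' : (f ≫ g) ≫ m = s.π := hm
    rw [← cancel_epi (f ≫ g), hm', Category.assoc, hh'', hh']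

/-- A quotient of a trivial covering (over the same base, along a regular epimorphism)
is again a trivial covering. -/
lemma trivialCovering_of_quotient [RegularCat C] (G : BirkhoffStructure C) {T Q E : C}
    {t : T ⟶ E} {q : T ⟶ Q} {g : Q ⟶ E} (hq : IsRegEpi q) (hg : IsRegEpi g)
    (hqt : q ≫ g = t) (ht : TrivialCovering G t) : TrivialCovering G g := by
  have DEg := G.stronglyBirkhoff g hg
  have DEq := G.stronglyBirkhoff q hq
  have hnatq : G.η.app T ≫ G.F.map q = q ≫ G.η.app Q := DEq.w
  -- the comparison morphisms of the naturality squares of `g` and `q`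
  have hmre : IsRegEpi (pullback.lift g (G.η.app Q) DEg.w.symm) := DEg.comparison
  have hcqre : IsRegEpi (pullback.lift q (G.η.app T) DEq.w.symm) := DEq.comparison
  set m : Q ⟶ pullback (G.η.app E) (G.F.map g) := pullback.lift g (G.η.app Q) DEg.w.symm with hmdef
  set cq : T ⟶ pullback (G.η.app Q) (G.F.map q) :=
    pullback.lift q (G.η.app T) DEq.w.symm with hcqdef
  -- `m` is a monomorphism
  have hmono : Mono m := by
    constructor
    intro W u v huv
    have hg' : u ≫ g = v ≫ g := by
      have h := huv =≫ pullback.fst (G.η.app E) (G.F.map g)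
      simpa [hmdef, pullback.lift_fst, pullback.lift_snd, pullback.lift_fst_assoc, pullback.lift_snd_assoc] using h
    have hη : u ≫ G.η.app Q = v ≫ G.η.app Q := by
      have h := huv =≫ pullback.snd (G.η.app E) (G.F.map g)
      simpa [hmdef, pullback.lift_fst, pullback.lift_snd, pullback.lift_fst_assoc, pullback.lift_snd_assoc] using h
    -- cover `u` by an element of `T`
    have hp₁ : IsRegEpi (pullback.snd q u) := RegularCat.regEpiPullbackStable q u hq
    have condx : pullback.fst q u ≫ q = pullback.snd q u ≫ u := pullback.condition
    have hw2 : (pullback.snd q u ≫ v) ≫ G.η.app Q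
        = (pullback.fst q u ≫ G.η.app T) ≫ G.F.map q := by
      have h1 : (pullback.fst q u ≫ G.η.app T) ≫ G.F.map q
          = (pullback.snd q u ≫ u) ≫ G.η.app Q := by
        rw [Category.assoc, hnatq, ← Category.assoc, condx]
      rw [h1, Category.assoc, Category.assoc, hη]
    set k := pullback.lift (pullback.snd q u ≫ v) (pullback.fst q u ≫ G.η.app T) hw2 with hkdef
    have hp₂ : IsRegEpi (pullback.snd cq k) := RegularCat.regEpiPullbackStable cq k hcqre
    have condz : pullback.fst cq k ≫ cq = pullback.snd cq k ≫ k := pullback.condition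
    have hzq : pullback.fst cq k ≫ q = pullback.snd cq k ≫ pullback.snd q u ≫ v := by
      have h₁ : pullback.fst cq k ≫ cq ≫ pullback.fst (G.η.app Q) (G.F.map q)
          = pullback.snd cq k ≫ k ≫ pullback.fst (G.η.app Q) (G.F.map q) := by
        rw [← Category.assoc, condz, Category.assoc]
      simpa [hcqdef, hkdef, pullback.lift_fst, pullback.lift_snd, pullback.lift_fst_assoc, pullback.lift_snd_assoc] using h₁
    have hzη : pullback.fst cq k ≫ G.η.app T
        = pullback.snd cq k ≫ pullback.fst q u ≫ G.η.app T := by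
      have h₁ : pullback.fst cq k ≫ cq ≫ pullback.snd (G.η.app Q) (G.F.map q)
          = pullback.snd cq k ≫ k ≫ pullback.snd (G.η.app Q) (G.F.map q) := by
        rw [← Category.assoc, condz, Category.assoc]
      simpa [hcqdef, hkdef, pullback.lift_fst, pullback.lift_snd, pullback.lift_fst_assoc, pullback.lift_snd_assoc] using h₁
    -- use that `t` is a trivial covering to identify the two covers
    have hz : pullback.fst cq k = pullback.snd cq k ≫ pullback.fst q u := by
      refine ht.2.hom_ext ?_ ?_
      · rw [Category.assoc]; exact hzη
      · have condx' := reassoc_of% condx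
        rw [← hqt, ← Category.assoc, hzq]
        simp only [Category.assoc]
        rw [← hg', condx']
    have hfinal : (pullback.snd cq k ≫ pullback.snd q u) ≫ u
        = (pullback.snd cq k ≫ pullback.snd q u) ≫ v := by
      calc (pullback.snd cq k ≫ pullback.snd q u) ≫ u
          = pullback.snd cq k ≫ pullback.fst q u ≫ q := by
            rw [Category.assoc, condx]
        _ = pullback.fst cq k ≫ q := by rw [hz, Category.assoc]
        _ = (pullback.snd cq k ≫ pullback.snd q u) ≫ v := by
            rw [hzq, Category.assoc]
    haveI := hp₁.epi
    haveI := hp₂.epi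
    rwa [Category.assoc, Category.assoc, cancel_epi, cancel_epi] at hfinal
  -- hence `m` is an isomorphism, so the naturality square of `g` is a pullback
  obtain ⟨rm⟩ := hmre
  haveI : RegularEpi m := rm
  haveI := hmono
  haveI : IsIso m := isIso_of_regularEpi_of_mono m rm
  have hpb : IsPullback g (G.η.app Q) (G.η.app E) (G.F.map g) :=
    IsPullback.of_iso_pullback ⟨DEg.w.symm⟩ (asIso m)
      (by simp [hmdef, pullback.lift_fst, pullback.lift_snd, pullback.lift_fst_assoc, pullback.lift_snd_assoc]) (by simp [hmdef, pullback.lift_fst, pullback.lift_snd, pullback.lift_fst_assoc, pullback.lift_snd_assoc])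
  exact ⟨hg, hpb.flip⟩

end Helpers

/-- coverings are stable under quotients along double extensions. -/
theorem statement_13 {C : Type u} [Category.{v} C] [HasFiniteLimits C] [BarrExact C]
    (G : BirkhoffStructure C)
    {A₁ A₀ B₁ B₀ : C} (fA : A₁ ⟶ A₀) (fB : B₁ ⟶ B₀)
    (φ₁ : A₁ ⟶ B₁) (φ₀ : A₀ ⟶ B₀)
    (hde : IsDoubleExt fA fB φ₁ φ₀)
    (h : Covering G fA) :
    Covering G fB := by
  obtain ⟨hfA, E, e, he, htriv⟩ := h
  -- the new witness: `e ≫ φ₀ : E ⟶ B₀`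
  have he' : IsRegEpi (e ≫ φ₀) := isRegEpi_comp he hde.bot
  have hg : IsRegEpi (pullback.snd fB (e ≫ φ₀)) :=
    RegularCat.regEpiPullbackStable fB (e ≫ φ₀) hde.right
  -- the comparison morphism of the double extension
  have hc : IsRegEpi (pullback.lift fA φ₁ hde.w.symm) := hde.comparison
  set c : A₁ ⟶ pullback φ₀ fB := pullback.lift fA φ₁ hde.w.symm with hcdef
  -- the induced morphism between the two pullbacks
  have hwq : (pullback.fst fA e ≫ φ₁) ≫ fB = pullback.snd fA e ≫ (e ≫ φ₀) := by
    rw [Category.assoc, hde.w, ← Category.assoc, pullback.condition, Category.assoc]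
  set q : pullback fA e ⟶ pullback fB (e ≫ φ₀) :=
    pullback.lift (pullback.fst fA e ≫ φ₁) (pullback.snd fA e) hwq with hqdef
  have hwr : (pullback.snd fB (e ≫ φ₀) ≫ e) ≫ φ₀ = pullback.fst fB (e ≫ φ₀) ≫ fB := by
    rw [Category.assoc, ← pullback.condition]
  set r : pullback fB (e ≫ φ₀) ⟶ pullback φ₀ fB :=
    pullback.lift (pullback.snd fB (e ≫ φ₀) ≫ e) (pullback.fst fB (e ≫ φ₀)) hwr with hrdef
  -- `q` is the pullback of the comparison morphism `c` along (the pullback of) `e`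
  have hsq : pullback.fst fA e ≫ c = q ≫ r := by
    apply pullback.hom_ext
    · simp only [hcdef, hqdef, hrdef, Category.assoc, pullback.lift_fst, pullback.lift_snd,
        pullback.lift_fst_assoc, pullback.lift_snd_assoc]
      exact pullback.condition
    · simp [hcdef, hqdef, hrdef, pullback.lift_fst, pullback.lift_snd, pullback.lift_fst_assoc, pullback.lift_snd_assoc]
  have hpb : IsPullback (pullback.fst fA e) q c r := by
    refine ⟨⟨hsq⟩, ⟨PullbackCone.IsLimit.mk hsq (fun s => ?_) (fun s => ?_) (fun s => ?_)
      (fun s l hl₁ hl₂ => ?_)⟩⟩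
    -- the universal lift
    · refine pullback.lift s.fst (s.snd ≫ pullback.snd fB (e ≫ φ₀)) ?_
      have h₁ : s.fst ≫ c ≫ pullback.fst φ₀ fB = s.snd ≫ r ≫ pullback.fst φ₀ fB := by
        rw [← Category.assoc, s.condition, Category.assoc]
      simp only [hcdef, hrdef, pullback.lift_fst] at h₁
      rw [h₁, ← Category.assoc]
    · exact pullback.lift_fst _ _ _
    · apply pullback.hom_ext
      · have h₂ : s.fst ≫ c ≫ pullback.snd φ₀ fB = s.snd ≫ r ≫ pullback.snd φ₀ fB := by
          rw [← Category.assoc, s.condition, Category.assoc]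
        simp only [hcdef, hrdef, pullback.lift_snd] at h₂
        simp only [hqdef, Category.assoc, pullback.lift_fst, pullback.lift_fst_assoc]
        exact h₂
      · simp [hqdef, pullback.lift_fst, pullback.lift_snd, pullback.lift_fst_assoc, pullback.lift_snd_assoc]
    · apply pullback.hom_ext
      · simpa [pullback.lift_fst, pullback.lift_snd, pullback.lift_fst_assoc, pullback.lift_snd_assoc] using hl₁
      · have : l ≫ q ≫ pullback.snd fB (e ≫ φ₀) = s.snd ≫ pullback.snd fB (e ≫ φ₀) := by
          rw [← Category.assoc, hl₂]
        simp only [hqdef, pullback.lift_snd] at this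
        simpa [pullback.lift_fst, pullback.lift_snd, pullback.lift_fst_assoc, pullback.lift_snd_assoc] using this
  -- hence `q` is a regular epimorphism
  have hqre : IsRegEpi q := by
    have h₁ : IsRegEpi (pullback.snd c r) := RegularCat.regEpiPullbackStable c r hc
    have h₂ := IsRegEpi.iso_comp hpb.isoPullback.hom h₁
    rwa [hpb.isoPullback_hom_snd] at h₂
  -- conclude with the quotient lemma for trivial coverings
  have hqt : q ≫ pullback.snd fB (e ≫ φ₀) = pullback.snd fA e := pullback.lift_snd _ _ _
  exact ⟨hde.right, E, e ≫ φ₀, he', trivialCovering_of_quotient G hqre hg hqt htriv⟩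

end Paper
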